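/- arXiv:1303.0879 — 5 statements merged into one kernel-verified Lean document; each statement's English description precedes it below -/
import Mathlib

section
/- Let N ≥ 1 and let s₁, …, s_N be complex numbers such that |∏_{j=k}^N s_j| < 1 for every k ∈ {1, …, N}. Then for every m ∈ ℕ, the iterated series ∑_{α₁=m}^∞ s₁^{α₁} ∑_{α₂=α₁}^∞ s₂^{α₂} ⋯ ∑_{α_N=α_{N−1}}^∞ s_N^{α_N} (each inner sum converging absolutely) converges and equals (∏_{j=1}^N s_j)^m / ∏_{k=1}^N (1 − ∏_{j=k}^N s_j). -/
open scoped BigOperators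

/-- `IterHasSum [c₁, …, c_N] m a` says that the iterated series
`∑_{α₁=m}^∞ c₁^{α₁} ∑_{α₂=α₁}^∞ c₂^{α₂} ⋯ ∑_{α_N=α_{N-1}}^∞ c_N^{α_N}`,
summed inductively from the innermost tail outward with each tail converging,
converges with value `a`. -/
inductive IterHasSum : List ℂ → ℕ → ℂ → Prop
  | nil (m : ℕ) : IterHasSum [] m 1
  | cons (c : ℂ) (rest : List ℂ) (m : ℕ) (f : ℕ → ℂ) (a : ℂ)
      (hf : ∀ j : ℕ, IterHasSum rest j (f j))
      (ha : HasSum (fun j : ℕ => c ^ (m + j) * f (m + j)) a) :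
      IterHasSum (c :: rest) m a

private lemma iter_aux (N : ℕ) (s : ℕ → ℂ)
    (hs : ∀ k, 1 ≤ k → k ≤ N → ‖∏ j ∈ Finset.Icc k N, s j‖ < 1) :
    ∀ n k, k + n = N + 1 → 1 ≤ k → ∀ m,
      IterHasSum ((List.range' k n).map s) m
        ((∏ j ∈ Finset.Icc k N, s j) ^ m /
          ∏ i ∈ Finset.Icc k N, (1 - ∏ j ∈ Finset.Icc i N, s j)) := by
  intro n
  induction n with
  | zero =>
    intro k hk hk1 m
    have : k = N + 1 := by omega
    subst this
    have he : Finset.Icc (N + 1) N = ∅ := by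
      simp [Finset.Icc_eq_empty_of_lt]
    simpa [he] using IterHasSum.nil m
  | succ n ih =>
    intro k hk hk1 m
    have hkN : k ≤ N := by omega
    have hrange : List.range' k (n + 1) = k :: List.range' (k + 1) n := by
      simp [List.range'_succ]
    rw [hrange]
    simp only [List.map_cons]
    set P := ∏ j ∈ Finset.Icc (k+1) N, s j with hP
    set Q := ∏ i ∈ Finset.Icc (k+1) N, (1 - ∏ j ∈ Finset.Icc i N, s j) with hQ
    have hsplit : ∀ (f : ℕ → ℂ), ∏ j ∈ Finset.Icc k N, f j = f k * ∏ j ∈ Finset.Icc (k+1) N, f j := by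
      intro f
      rw [← Finset.Ico_add_one_right_eq_Icc, ← Finset.Ico_add_one_right_eq_Icc,
        Finset.prod_eq_prod_Ico_succ_bot (by omega)]
    have hPk : ∏ j ∈ Finset.Icc k N, s j = s k * P := hsplit s
    have hQk : ∏ i ∈ Finset.Icc k N, (1 - ∏ j ∈ Finset.Icc i N, s j)
        = (1 - ∏ j ∈ Finset.Icc k N, s j) * Q :=
      hsplit (fun i => 1 - ∏ j ∈ Finset.Icc i N, s j)
    have hnorm : ‖∏ j ∈ Finset.Icc k N, s j‖ < 1 := hs k hk1 hkN
    refine IterHasSum.cons (s k) _ m (fun j => P ^ j / Q) _ (fun j => ih (k+1) (by omega) (by omega) j) ?_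
    have hgeo : HasSum (fun j : ℕ => (∏ i ∈ Finset.Icc k N, s i) ^ m *
        (∏ i ∈ Finset.Icc k N, s i) ^ j / Q)
        ((∏ i ∈ Finset.Icc k N, s i) ^ m * (1 - ∏ i ∈ Finset.Icc k N, s i)⁻¹ / Q) :=
      ((hasSum_geometric_of_norm_lt_one hnorm).mul_left _).div_const Q
    have hfun : (fun j : ℕ => s k ^ (m + j) * (P ^ (m + j) / Q))
        = fun j : ℕ => (∏ i ∈ Finset.Icc k N, s i) ^ m *
            (∏ i ∈ Finset.Icc k N, s i) ^ j / Q := by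
      funext j
      rw [hPk, mul_pow, pow_add, pow_add]
      ring
    rw [hfun]
    convert hgeo using 1
    rw [hQk, ← div_div, div_eq_mul_inv ((∏ i ∈ Finset.Icc k N, s i) ^ m)]

theorem iterated_geometric_sum (N : ℕ) (hN : 1 ≤ N) (s : ℕ → ℂ)
    (hs : ∀ k, 1 ≤ k → k ≤ N → ‖∏ j ∈ Finset.Icc k N, s j‖ < 1) (m : ℕ) :
    IterHasSum ((List.range' 1 N).map s) m
      ((∏ j ∈ Finset.Icc 1 N, s j) ^ m /
        ∏ k ∈ Finset.Icc 1 N, (1 - ∏ j ∈ Finset.Icc k N, s j)) := by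
  exact iter_aux N s hs N 1 (by omega) le_rfl m
end

section
/- Let s and b be real numbers with 0 < s < 1, 2s − 1 < b < 0, and D := (1−s)² + 4bs > 0. Define v₋ = (1 − s − √D)/(2b) and v₊ = (1 − s + √D)/(2b). Then v₋ and v₊ are the two (distinct, real) roots of the quadratic b v² + (s−1) v − s = 0, and |v₋| < 1 while |v₊| > 1; that is, v₋ is the only root lying inside the unit circle. -/
theorem quadratic_root_inside_unit_circle (s b : ℝ) (hs0 : 0 < s) (hs1 : s < 1)
    (hb1 : 2 * s - 1 < b) (hb0 : b < 0) (hD : 0 < (1 - s) ^ 2 + 4 * b * s) :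
    (∀ v : ℝ, b * v ^ 2 + (s - 1) * v - s = 0 ↔
      (v = (1 - s - Real.sqrt ((1 - s) ^ 2 + 4 * b * s)) / (2 * b) ∨
       v = (1 - s + Real.sqrt ((1 - s) ^ 2 + 4 * b * s)) / (2 * b))) ∧
    (1 - s - Real.sqrt ((1 - s) ^ 2 + 4 * b * s)) / (2 * b) ≠
      (1 - s + Real.sqrt ((1 - s) ^ 2 + 4 * b * s)) / (2 * b) ∧
    |(1 - s - Real.sqrt ((1 - s) ^ 2 + 4 * b * s)) / (2 * b)| < 1 ∧
    1 < |(1 - s + Real.sqrt ((1 - s) ^ 2 + 4 * b * s)) / (2 * b)| := by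
  have hb : b ≠ 0 := ne_of_lt hb0
  set r := Real.sqrt ((1 - s) ^ 2 + 4 * b * s) with hrdef
  have hr2 : r ^ 2 = (1 - s) ^ 2 + 4 * b * s := Real.sq_sqrt hD.le
  have hr0 : 0 < r := Real.sqrt_pos.2 hD
  have hkey : (1 - s + 2 * b) ^ 2 < r ^ 2 := by rw [hr2]; nlinarith
  have h1 : 1 - s + 2 * b < r := by nlinarith [sq_nonneg (r + (1 - s + 2 * b))]
  have h2 : -(1 - s + 2 * b) < r := by nlinarith [sq_nonneg (r - (1 - s + 2 * b))]
  have hrlt : r < 1 - s := by nlinarith [sq_nonneg (r + (1 - s))]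
  have hb2 : 2 * b < 0 := by linarith
  have hvm1 : -1 < (1 - s - r) / (2 * b) := by
    rw [lt_div_iff_of_neg hb2]; linarith
  have hvm0 : (1 - s - r) / (2 * b) < 0 := div_neg_of_pos_of_neg (by linarith) hb2
  have hvp1 : (1 - s + r) / (2 * b) < -1 := by
    rw [div_lt_iff_of_neg hb2]; linarith
  refine ⟨?_, ?_, ?_, ?_⟩
  · intro v
    have hfact : b * v ^ 2 + (s - 1) * v - s =
        b * (v - (1 - s - r) / (2 * b)) * (v - (1 - s + r) / (2 * b)) := by
      field_simp
      linear_combination hr2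
    rw [hfact]
    rw [mul_eq_zero, mul_eq_zero, sub_eq_zero, sub_eq_zero]
    simp [hb]
  · intro h
    have := hvm1
    rw [h] at this
    linarith
  · rw [abs_lt]; exact ⟨hvm1, by linarith⟩
  · rw [abs_of_neg (by linarith : (1 - s + r) / (2 * b) < 0)]; linarith
end

section
/- Let a, t, u, s be real numbers, set b = a(1−t)(1−u), and assume s ≠ 0, b ≠ 0, b ≠ 1, and D := (1−s)² + 4bs > 0. Let v₋ = (1 − s − √D)/(2b). Then v₋ ≠ 1, 1 − b v₋ = (1 + s + √D)/2 ≠ 0, and (v₋/(v₋−1)) · (a t u)/(1 − b v₋) = a t u · [1 + (s + 2b) s − (1+s) √(s² − 2(1−2b)s + 1)] / (2 (1 − b)² s). (Here s² − 2(1−2b)s + 1 = (1−s)² + 4bs = D, so the square root is the same √D.) -/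
theorem wtilde_closed_form (a t u s b : ℝ) (hb : b = a * (1 - t) * (1 - u))
    (hs : s ≠ 0) (hb0 : b ≠ 0) (hb1 : b ≠ 1)
    (hD : 0 < (1 - s) ^ 2 + 4 * b * s) :
    (1 - s - Real.sqrt ((1 - s) ^ 2 + 4 * b * s)) / (2 * b) ≠ 1 ∧
    1 - b * ((1 - s - Real.sqrt ((1 - s) ^ 2 + 4 * b * s)) / (2 * b)) =
      (1 + s + Real.sqrt ((1 - s) ^ 2 + 4 * b * s)) / 2 ∧
    (1 + s + Real.sqrt ((1 - s) ^ 2 + 4 * b * s)) / 2 ≠ 0 ∧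
    (((1 - s - Real.sqrt ((1 - s) ^ 2 + 4 * b * s)) / (2 * b)) /
        (((1 - s - Real.sqrt ((1 - s) ^ 2 + 4 * b * s)) / (2 * b)) - 1)) *
      ((a * t * u) /
        (1 - b * ((1 - s - Real.sqrt ((1 - s) ^ 2 + 4 * b * s)) / (2 * b)))) =
      a * t * u *
        (1 + (s + 2 * b) * s -
          (1 + s) * Real.sqrt (s ^ 2 - 2 * (1 - 2 * b) * s + 1)) /
        (2 * (1 - b) ^ 2 * s) := by
  set R := Real.sqrt ((1 - s) ^ 2 + 4 * b * s) with hRdef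
  have hR2 : R ^ 2 = (1 - s) ^ 2 + 4 * b * s := Real.sq_sqrt hD.le
  have hargeq : s ^ 2 - 2 * (1 - 2 * b) * s + 1 = (1 - s) ^ 2 + 4 * b * s := by ring
  have hsame : Real.sqrt (s ^ 2 - 2 * (1 - 2 * b) * s + 1) = R := by rw [hargeq]
  have h2b : (2 : ℝ) * b ≠ 0 := by positivity
  have h1 : (1 - s - R) / (2 * b) ≠ 1 := by
    intro h
    have h' : 1 - s - R = 2 * b := by
      field_simp at h; linarith
    have hR' : R = 1 - s - 2 * b := by linarith
    have key : (1 - s - 2*b)^2 = (1 - s)^2 + 4*b*s := by rw [← hR']; exact hR2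
    have : b * (b - 1) = 0 := by linear_combination key / 4
    rcases mul_eq_zero.1 this with h0 | h0
    · exact hb0 h0
    · exact hb1 (by linarith)
  have h2 : 1 - b * ((1 - s - R) / (2 * b)) = (1 + s + R) / 2 := by
    field_simp
    ring
  have h3 : (1 + s + R) / 2 ≠ 0 := by
    intro h
    have hR' : R = -(1 + s) := by linarith [div_eq_zero_iff.1 h]
    have key : (-(1+s))^2 = (1 - s)^2 + 4*b*s := by rw [← hR']; exact hR2
    have : s * (1 - b) = 0 := by linear_combination key / 4
    rcases mul_eq_zero.1 this with h0 | h0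
    · exact hs h0
    · exact hb1 (by linarith)
  have hne1 : 1 - s - R - 2 * b ≠ 0 := by
    intro h
    exact h1 (by field_simp; linarith)
  have hne3 : 1 + s + R ≠ 0 := by
    intro h
    exact h3 (by rw [h]; simp)
  have hbb : (1 : ℝ) - b ≠ 0 := fun h => hb1 (by linarith)
  refine ⟨h1, h2, h3, ?_⟩
  rw [hsame, h2]
  have hv : (1 - s - R) / (2 * b) - 1 = (1 - s - R - 2 * b) / (2 * b) := by
    field_simp
  field_simp
  linear_combination (a*t*u*((1 - 2*s - s^2 - 2*b) - (1+s)*R)) * hR2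
end

section
/- Let s and b be real numbers with 0 < s < 1, −1 < b < 0, 2s − 1 < b, and D := (1−s)² + 4bs > 0, and let c be a real number. Let v₋ = (1 − s − √D)/(2b). Then 1 − b v₋ = (1 + s + √D)/2 > 0 and (1/(2πi)) ∮_{|v|=1} (1 − bv)^{−c} / (b v² + (s−1) v − s) dv = −(1 − b v₋)^{−c} / √D, where (1 − bv)^{−c} is the principal branch of the complex power (well defined and holomorphic on the closed unit disk since Re(1 − bv) > 0 there), and the integral is the counterclockwise contour integral over the unit circle. -/
theorem contour_integral_power_over_quadratic (s b c : ℝ) (hs0 : 0 < s) (hs1 : s < 1)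
    (hbm1 : -1 < b) (hb0 : b < 0) (hb2s : 2 * s - 1 < b)
    (hD : 0 < (1 - s) ^ 2 + 4 * b * s) :
    1 - b * ((1 - s - Real.sqrt ((1 - s) ^ 2 + 4 * b * s)) / (2 * b)) =
      (1 + s + Real.sqrt ((1 - s) ^ 2 + 4 * b * s)) / 2 ∧
    0 < (1 + s + Real.sqrt ((1 - s) ^ 2 + 4 * b * s)) / 2 ∧
    (2 * (Real.pi : ℂ) * Complex.I)⁻¹ *
        (∮ v in C(0, 1),
          (1 - (b : ℂ) * v) ^ (-(c : ℂ)) /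
            ((b : ℂ) * v ^ 2 + ((s : ℂ) - 1) * v - (s : ℂ))) =
      (((-((1 - b * ((1 - s - Real.sqrt ((1 - s) ^ 2 + 4 * b * s)) / (2 * b))) ^ (-c)) /
          Real.sqrt ((1 - s) ^ 2 + 4 * b * s) : ℝ)) : ℂ) := by
  have hb : b ≠ 0 := ne_of_lt hb0
  set D : ℝ := (1 - s) ^ 2 + 4 * b * s with hDdef
  set d : ℝ := Real.sqrt D with hddef
  have hd2 : d ^ 2 = D := Real.sq_sqrt hD.le
  have hd0 : 0 < d := Real.sqrt_pos.mpr hD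
  -- key inequality : (1-s+2b)^2 < D
  have hkey : (1 - s + 2 * b) ^ 2 < D := by nlinarith
  have hA : 1 - s + 2 * b < d := by nlinarith [sq_nonneg (d + (1 - s + 2 * b))]
  have hB : s - 1 - 2 * b < d := by nlinarith [sq_nonneg (d + (s - 1 - 2 * b))]
  have hdlt : d < 1 - s := by nlinarith [sq_nonneg (d - (1 - s))]
  -- part 1
  have h1 : 1 - b * ((1 - s - d) / (2 * b)) = (1 + s + d) / 2 := by
    field_simp; ring
  have h2 : 0 < (1 + s + d) / 2 := by linarith
  refine ⟨h1, h2, ?_⟩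
  -- complex roots
  set vm : ℂ := (((1 - s - d) / (2 * b) : ℝ) : ℂ) with hvmdef
  set vp : ℂ := (((1 - s + d) / (2 * b) : ℝ) : ℂ) with hvpdef
  have habs_vm : ‖vm‖ < 1 := by
    rw [hvmdef, Complex.norm_real, Real.norm_eq_abs, abs_div, abs_of_pos (by linarith : (0:ℝ) < 1 - s - d),
      abs_of_neg (by linarith : 2 * b < 0)]
    rw [div_lt_one (by linarith)]
    linarith
  have habs_vp : 1 < ‖vp‖ := by
    rw [hvpdef, Complex.norm_real, Real.norm_eq_abs, abs_div, abs_of_pos (by linarith : (0:ℝ) < 1 - s + d),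
      abs_of_neg (by linarith : 2 * b < 0)]
    rw [lt_div_iff₀ (by linarith)]
    linarith
  have hd2' : (d : ℂ) ^ 2 = ((1 : ℂ) - s) ^ 2 + 4 * b * s := by
    have := hd2
    rw [hDdef] at this
    exact_mod_cast congrArg (Complex.ofReal) this
  have hbC : (b : ℂ) ≠ 0 := by exact_mod_cast hb
  have hfact : ∀ v : ℂ, (b : ℂ) * v ^ 2 + ((s : ℂ) - 1) * v - (s : ℂ)
      = (b : ℂ) * (v - vm) * (v - vp) := by
    intro v
    rw [hvmdef, hvpdef]
    push_cast
    field_simp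
    linear_combination hd2'
  -- the function f
  set f : ℂ → ℂ := fun v => (1 - (b : ℂ) * v) ^ (-(c : ℂ)) / ((b : ℂ) * (v - vp)) with hfdef
  have hdiff : DifferentiableOn ℂ f (Metric.closedBall 0 1) := by
    intro v hv
    have hv1 : ‖v‖ ≤ 1 := by
      simpa [Complex.dist_eq] using Metric.mem_closedBall.mp hv
    have hre : |v.re| ≤ 1 := le_trans (Complex.abs_re_le_norm v) hv1
    have hre' := abs_le.mp hre
    have hslit : (1 - (b : ℂ) * v) ∈ Complex.slitPlane := by
      rw [Complex.mem_slitPlane_iff]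
      left
      simp only [Complex.sub_re, Complex.one_re, Complex.mul_re, Complex.ofReal_re,
        Complex.ofReal_im, zero_mul, sub_zero]
      nlinarith [hre'.1, hre'.2]
    have hvp_ne : v - vp ≠ 0 := by
      intro h
      rw [sub_eq_zero] at h
      rw [h] at hv1
      linarith
    apply DifferentiableAt.differentiableWithinAt
    apply DifferentiableAt.div
    · exact DifferentiableAt.cpow
        ((differentiableAt_const _).sub ((differentiableAt_fun_id).const_mul _))
        (differentiableAt_const _) hslit
    · exact (differentiableAt_fun_id.sub (differentiableAt_const _)).const_mul _
    · exact mul_ne_zero hbC hvp_ne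
  have hvm_mem : vm ∈ Metric.ball (0 : ℂ) 1 := by
    simpa [Complex.dist_eq] using habs_vm
  have hint : (∮ v in C(0, 1), (v - vm)⁻¹ • f v) = (2 * Real.pi * Complex.I : ℂ) • f vm :=
    hdiff.circleIntegral_sub_inv_smul hvm_mem
  have hcong : (∮ v in C(0, 1),
      (1 - (b : ℂ) * v) ^ (-(c : ℂ)) / ((b : ℂ) * v ^ 2 + ((s : ℂ) - 1) * v - (s : ℂ)))
      = ∮ v in C(0, 1), (v - vm)⁻¹ • f v := by
    refine circleIntegral.integral_congr zero_le_one fun v hv => ?_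
    have hv1 : ‖v‖ = 1 := by
      simpa [Complex.dist_eq] using hv
    have hvm_ne : v - vm ≠ 0 := by
      intro h; rw [sub_eq_zero] at h; rw [h] at hv1; rw [hv1] at habs_vm; linarith
    have hvp_ne : v - vp ≠ 0 := by
      intro h; rw [sub_eq_zero] at h; rw [h] at hv1; rw [hv1] at habs_vp; linarith
    rw [hfact v, hfdef]
    simp only [smul_eq_mul]
    field_simp
  rw [hcong, hint, smul_eq_mul, inv_mul_cancel_left₀ (by
    simp [Real.pi_ne_zero, Complex.I_ne_zero, Complex.ext_iff] : (2 * (Real.pi : ℂ) * Complex.I) ≠ 0)]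
  -- now compute f vm
  have hden : (b : ℂ) * (vm - vp) = -(d : ℂ) := by
    rw [hvmdef, hvpdef]
    push_cast
    field_simp
    ring
  have hbase : (1 : ℂ) - (b : ℂ) * vm = (((1 + s + d) / 2 : ℝ) : ℂ) := by
    rw [hvmdef]
    push_cast
    field_simp
    ring
  have hcpow : ((1 : ℂ) - (b : ℂ) * vm) ^ (-(c : ℂ))
      = ((((1 + s + d) / 2 : ℝ) ^ (-c) : ℝ) : ℂ) := by
    rw [hbase, show (-(c : ℂ)) = ((-c : ℝ) : ℂ) by push_cast; ring,
      ← Complex.ofReal_cpow h2.le]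
  rw [hfdef]
  simp only
  rw [hden, h1, hcpow]
  push_cast
  ring
end

section
/- Let b and s be real numbers with −1 < b ≤ 0 and 0 < s < (1+b)/2, and let v be a complex number with |v| = 1. Then 1 − bv ≠ 0 and |s(v−1) / (v(1−bv))| < 1. -/
theorem ratio_bound_on_unit_circle (b s : ℝ) (v : ℂ) (hbm1 : -1 < b) (hb0 : b ≤ 0)
    (hs0 : 0 < s) (hs1 : s < (1 + b) / 2) (hv : ‖v‖ = 1) :
    1 - (b : ℂ) * v ≠ 0 ∧ ‖(s : ℂ) * (v - 1) / (v * (1 - (b : ℂ) * v))‖ < 1 := by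
  have hb1 : (0:ℝ) < 1 + b := by linarith
  have hbv : ‖(b:ℂ) * v‖ = -b := by
    rw [norm_mul, Complex.norm_real, hv, mul_one, Real.norm_eq_abs, abs_of_nonpos hb0]
  have hlow : 1 + b ≤ ‖1 - (b:ℂ) * v‖ := by
    have h := norm_sub_norm_le (1 : ℂ) ((b:ℂ) * v)
    rw [norm_one, hbv] at h
    linarith
  have hne : 1 - (b:ℂ) * v ≠ 0 := by
    intro h
    rw [h, norm_zero] at hlow
    linarith
  refine ⟨hne, ?_⟩
  have hden : ‖v * (1 - (b:ℂ) * v)‖ = ‖1 - (b:ℂ) * v‖ := by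
    rw [norm_mul, hv, one_mul]
  have hdenpos : 0 < ‖v * (1 - (b:ℂ) * v)‖ := by
    rw [hden]; linarith
  rw [norm_div, div_lt_one hdenpos, hden, norm_mul, Complex.norm_real,
    Real.norm_eq_abs, abs_of_pos hs0]
  have hnum : ‖v - 1‖ ≤ 2 := by
    have h := norm_sub_le v 1
    rw [hv, norm_one] at h
    linarith
  calc s * ‖v - 1‖ ≤ s * 2 := by nlinarith
    _ < 1 + b := by linarith
    _ ≤ ‖1 - (b:ℂ) * v‖ := hlow
end
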